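/- Let n ≥ 4 be even, let V be a left K-vector space over a division ring K with finrank V = n + 1, and set m = ⌊(n−1)/2⌋ = (n−2)/2. For all lines a₁, b₁ of V the following are equivalent: (i) a₁ = b₁ or a₁ ⊓ b₁ = ⊥; (ii) a₁ = b₁, or there exist lines a₂, …, a_m such that for every line g there exist lines b₂, …, b_{m+1} with: for each 2 ≤ i ≤ m+1, bᵢ meets a_{i−1} and b_{i−1} in two distinct points, and g ∼ b_{m+1}. -/

import Mathlib

/-- `a` is a projective line: a submodule of finrank 2. -/
def PLine {K V : Type*} [DivisionRing K] [AddCommGroup V] [Module K V]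
    (a : Submodule K V) : Prop := Module.finrank K a = 2

/-- Two lines intersect: they are different and have nontrivial intersection. -/
def PMeets {K V : Type*} [DivisionRing K] [AddCommGroup V] [Module K V]
    (a b : Submodule K V) : Prop := a ≠ b ∧ a ⊓ b ≠ ⊥

/-- `x` meets the lines `y` and `z` in two distinct points. -/
def PMeetsTwo {K V : Type*} [DivisionRing K] [AddCommGroup V] [Module K V]
    (x y z : Submodule K V) : Prop := PMeets x y ∧ PMeets x z ∧ x ⊓ y ≠ x ⊓ z

open Module Submodule

section Aux

variable {K V : Type*} [DivisionRing K] [AddCommGroup V] [Module K V]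

/-- A chain of submodules: iteratively adjoin `nl` of the previous sup. -/
noncomputable def FChain (nl : Submodule K V → Submodule K V)
    (D : Submodule K V × Submodule K V) : ℕ → Submodule K V × Submodule K V
  | 0 => D
  | (k+1) => (nl (FChain nl D k).2, (FChain nl D k).2 ⊔ nl (FChain nl D k).2)

/-- Iterated sup of a family of submodules. -/
def WChain (D : Submodule K V) (a : ℕ → Submodule K V) : ℕ → Submodule K V
  | 0 => D
  | (k+1) => WChain D a k ⊔ a (k+1)

lemma WChain_mono (D : Submodule K V) (a : ℕ → Submodule K V) :
    Monotone (WChain D a) := by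
  apply monotone_nat_of_le_succ
  intro k
  exact le_sup_left

lemma line_exists_ne_zero [FiniteDimensional K V] {b : Submodule K V} (hb : PLine b) :
    ∃ v ∈ b, v ≠ 0 := by
  have : b ≠ ⊥ := by
    intro e
    rw [e] at hb
    simp [PLine, finrank_bot] at hb
  exact (Submodule.ne_bot_iff b).1 this

variable [FiniteDimensional K V]

lemma aux_pair_finrank {v w : V} (hv : v ≠ 0) (hw : w ≠ 0)
    (hdisj : Disjoint (K ∙ v) (K ∙ w)) :
    Module.finrank K ↥((K ∙ v) ⊔ (K ∙ w)) = 2 := by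
  have h := Submodule.finrank_sup_add_finrank_inf_eq (K ∙ v) (K ∙ w)
  rw [hdisj.eq_bot, finrank_span_singleton hv, finrank_span_singleton hw, finrank_bot] at h
  omega

lemma aux_core {S A B : Submodule K V} {P x : V}
    (hP0 : P ≠ 0) (hx0 : x ≠ 0) (hPS : P ∈ S) (hxA : x ∈ A)
    (hSA : Disjoint S A) (hPB : P ∈ B) (hBS : B ≤ S) :
    PLine ((K ∙ P) ⊔ (K ∙ x)) ∧ PMeetsTwo ((K ∙ P) ⊔ (K ∙ x)) A B ∧
      ((K ∙ P) ⊔ (K ∙ x)) ⊓ A = K ∙ x := by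
  have hPle : (K ∙ P) ≤ S := (span_singleton_le_iff_mem _ _).2 hPS
  have hxle : (K ∙ x) ≤ A := (span_singleton_le_iff_mem _ _).2 hxA
  have hdisj : Disjoint (K ∙ P) (K ∙ x) := hSA.mono hPle hxle
  have hline : PLine ((K ∙ P) ⊔ (K ∙ x)) := aux_pair_finrank hP0 hx0 hdisj
  have hPmem : P ∈ (K ∙ P) ⊔ (K ∙ x) := Submodule.mem_sup_left (mem_span_singleton_self P)
  have hxmem : x ∈ (K ∙ P) ⊔ (K ∙ x) := Submodule.mem_sup_right (mem_span_singleton_self x)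
  have hInfA : ((K ∙ P) ⊔ (K ∙ x)) ⊓ A = K ∙ x := by
    refine le_antisymm ?_ (le_inf le_sup_right hxle)
    intro y hy
    rw [Submodule.mem_inf] at hy
    obtain ⟨hyb, hyA⟩ := hy
    obtain ⟨p, hp, q, hq, rfl⟩ := mem_sup.1 hyb
    have hpA : p ∈ A := by
      have : (p + q) - q ∈ A := sub_mem hyA (hxle hq)
      simpa using this
    have hp0 : p = 0 := (disjoint_def.1 hSA) p (hPle hp) hpA
    simpa [hp0] using hq
  have hInfB : ((K ∙ P) ⊔ (K ∙ x)) ⊓ B = K ∙ P := by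
    refine le_antisymm ?_ (le_inf le_sup_left ((span_singleton_le_iff_mem _ _).2 hPB))
    intro y hy
    rw [Submodule.mem_inf] at hy
    obtain ⟨hyb, hyB⟩ := hy
    obtain ⟨p, hp, q, hq, rfl⟩ := mem_sup.1 hyb
    have hqS : q ∈ S := by
      have : (p + q) - p ∈ S := sub_mem (hBS hyB) (hPle hp)
      simpa using this
    have hq0 : q = 0 := (disjoint_def.1 hSA) q hqS (hxle hq)
    simpa [hq0] using hp
  have hneqA : (K ∙ P) ⊔ (K ∙ x) ≠ A := by
    intro e
    exact hP0 ((disjoint_def.1 hSA) P hPS (e ▸ hPmem))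
  have hneqB : (K ∙ P) ⊔ (K ∙ x) ≠ B := by
    intro e
    exact hx0 ((disjoint_def.1 hSA) x (hBS (e ▸ hxmem)) hxA)
  refine ⟨hline, ⟨⟨hneqA, ?_⟩, ⟨hneqB, ?_⟩, ?_⟩, hInfA⟩
  · rw [hInfA]
    simpa [Submodule.span_singleton_eq_bot] using hx0
  · rw [hInfB]
    simpa [Submodule.span_singleton_eq_bot] using hP0
  · rw [hInfA, hInfB]
    intro e
    have : x ∈ (K ∙ P) := e ▸ mem_span_singleton_self x
    exact hx0 ((disjoint_def.1 hSA) x (hPle this) hxA)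

lemma exists_line_disjoint (W : Submodule K V) (h : finrank K W + 2 ≤ finrank K V) :
    ∃ g : Submodule K V, PLine g ∧ Disjoint W g := by
  obtain ⟨W', hc⟩ := Submodule.exists_isCompl W
  have hrk : finrank K W + finrank K W' = finrank K V :=
    Submodule.finrank_add_eq_of_isCompl hc
  have h2 : 2 ≤ finrank K W' := by omega
  have hne : W' ≠ ⊥ := by
    intro e
    rw [e, finrank_bot] at h2
    omega
  obtain ⟨v, hvW, hv0⟩ := (Submodule.ne_bot_iff _).1 hne
  have hnotle : ¬ (W' ≤ K ∙ v) := by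
    intro hle
    have := Submodule.finrank_mono hle
    rw [finrank_span_singleton hv0] at this
    omega
  obtain ⟨w, hwW, hwv⟩ := SetLike.not_le_iff_exists.1 hnotle
  have hw0 : w ≠ 0 := fun e => hwv (by simp [e])
  have hdisj : Disjoint (K ∙ v) (K ∙ w) := by
    rw [disjoint_def]
    intro y hyv hyw
    rw [Submodule.mem_span_singleton] at hyw
    obtain ⟨c, rfl⟩ := hyw
    by_cases hc : c = 0
    · simp [hc]
    · exfalso
      apply hwv
      have : c⁻¹ • (c • w) ∈ K ∙ v := Submodule.smul_mem _ _ hyv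
      rwa [smul_smul, inv_mul_cancel₀ hc, one_smul] at this
  refine ⟨(K ∙ v) ⊔ (K ∙ w), aux_pair_finrank hv0 hw0 hdisj, ?_⟩
  have hgle : (K ∙ v) ⊔ (K ∙ w) ≤ W' :=
    sup_le ((span_singleton_le_iff_mem _ _).2 hvW) ((span_singleton_le_iff_mem _ _).2 hwW)
  exact hc.disjoint.mono_right hgle

lemma pmeets_two_le {x y z : Submodule K V} (hx : PLine x) (hy : PLine y) (hz : PLine z)
    (h : PMeetsTwo x y z) : x ≤ y ⊔ z := by
  obtain ⟨⟨hxy, hxyb⟩, ⟨hxz, hxzb⟩, hne⟩ := h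
  have hX1 : finrank K ↥(x ⊓ y) = 1 := by
    have hne0 : finrank K ↥(x ⊓ y) ≠ 0 := by
      simpa [Submodule.finrank_eq_zero] using hxyb
    by_contra hcon
    have h2 : 2 ≤ finrank K ↥(x ⊓ y) := by
      have : finrank K ↥(x ⊓ y) ≤ finrank K ↥x := Submodule.finrank_mono inf_le_left
      omega
    have hXx : x ⊓ y = x := Submodule.eq_of_le_of_finrank_le inf_le_left (by rw [hx]; omega)
    have : x = y := Submodule.eq_of_le_of_finrank_le (hXx ▸ inf_le_right) (by rw [hx, hy])
    exact hxy this
  have hY1 : finrank K ↥(x ⊓ z) = 1 := by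
    have hne0 : finrank K ↥(x ⊓ z) ≠ 0 := by
      simpa [Submodule.finrank_eq_zero] using hxzb
    by_contra hcon
    have h2 : 2 ≤ finrank K ↥(x ⊓ z) := by
      have : finrank K ↥(x ⊓ z) ≤ finrank K ↥x := Submodule.finrank_mono inf_le_left
      omega
    have hXx : x ⊓ z = x := Submodule.eq_of_le_of_finrank_le inf_le_left (by rw [hx]; omega)
    have : x = z := Submodule.eq_of_le_of_finrank_le (hXx ▸ inf_le_right) (by rw [hx, hz])
    exact hxz this
  have hbot : (x ⊓ y) ⊓ (x ⊓ z) = ⊥ := by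
    by_contra hcon
    have hge : 1 ≤ finrank K ↥((x ⊓ y) ⊓ (x ⊓ z)) := by
      have : finrank K ↥((x ⊓ y) ⊓ (x ⊓ z)) ≠ 0 := by
        simpa [Submodule.finrank_eq_zero] using hcon
      omega
    have h1 : (x ⊓ y) ⊓ (x ⊓ z) = x ⊓ y :=
      Submodule.eq_of_le_of_finrank_le inf_le_left (by omega)
    have h2 : (x ⊓ y) ⊓ (x ⊓ z) = x ⊓ z :=
      Submodule.eq_of_le_of_finrank_le inf_le_right (by omega)
    exact hne (h1 ▸ h2)
  have hsum := Submodule.finrank_sup_add_finrank_inf_eq (x ⊓ y) (x ⊓ z)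
  rw [hbot, finrank_bot, hX1, hY1] at hsum
  have hsup : (x ⊓ y) ⊔ (x ⊓ z) = x := by
    refine Submodule.eq_of_le_of_finrank_le (sup_le inf_le_left inf_le_left) ?_
    rw [hx]
    omega
  calc x = (x ⊓ y) ⊔ (x ⊓ z) := hsup.symm
    _ ≤ y ⊔ z := sup_le_sup inf_le_right inf_le_right

end Aux

theorem statement3 {K V : Type*} [DivisionRing K] [AddCommGroup V] [Module K V]
    {n m : ℕ} (hn : 4 ≤ n) (hne : Even n) (hm : m = (n - 1) / 2)
    (hdim : Module.finrank K V = n + 1)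
    (a₁ b₁ : Submodule K V) (ha₁ : PLine a₁) (hb₁ : PLine b₁) :
    (a₁ = b₁ ∨ a₁ ⊓ b₁ = ⊥) ↔
    (a₁ = b₁ ∨ ∃ a : ℕ → Submodule K V, a 1 = a₁ ∧
      (∀ i, 2 ≤ i → i ≤ m → PLine (a i)) ∧
      ∀ g : Submodule K V, PLine g → ∃ b : ℕ → Submodule K V, b 1 = b₁ ∧
        (∀ i, 2 ≤ i → i ≤ m + 1 → PLine (b i)) ∧
        (∀ i, 2 ≤ i → i ≤ m + 1 → PMeetsTwo (b i) (a (i - 1)) (b (i - 1))) ∧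
        PMeets g (b (m + 1))) := by
  classical
  have fdV : FiniteDimensional K V := FiniteDimensional.of_finrank_pos (by omega)
  obtain ⟨t, ht⟩ := hne
  have hm1 : 1 ≤ m := by omega
  have hnm : n = 2 * m + 2 := by omega
  have hVdim : finrank K V = 2 * m + 3 := by rw [hdim]; omega
  constructor
  · -- forward direction
    rintro (heq | hbot)
    · exact Or.inl heq
    · right
      have hdisjab : Disjoint b₁ a₁ := by
        rw [disjoint_def]
        intro y hy1 hy2
        have : y ∈ a₁ ⊓ b₁ := Submodule.mem_inf.2 ⟨hy2, hy1⟩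
        rw [hbot] at this
        simpa using this
      -- choice function producing disjoint lines
      obtain ⟨nl, nl_spec⟩ : ∃ nl : Submodule K V → Submodule K V,
          ∀ W : Submodule K V, finrank K W + 2 ≤ finrank K V →
            PLine (nl W) ∧ Disjoint W (nl W) := by
        refine ⟨fun W => if h : finrank K W + 2 ≤ finrank K V then
          (exists_line_disjoint W h).choose else ⊤, fun W h => ?_⟩
        simp only [dif_pos h]
        exact (exists_line_disjoint W h).choose_spec
      set F : ℕ → Submodule K V × Submodule K V := FChain nl (a₁, b₁ ⊔ a₁) with hF
      have hF0 : F 0 = (a₁, b₁ ⊔ a₁) := rfl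
      have hFsucc : ∀ k, F (k+1) = (nl (F k).2, (F k).2 ⊔ nl (F k).2) := fun k => rfl
      -- the candidate a-family
      set A : ℕ → Submodule K V := fun i => (F (i-1)).1 with hA
      have hA1 : A 1 = a₁ := rfl
      -- invariant on dimensions
      have hinv : ∀ k, k ≤ m - 1 → finrank K ↥((F k).2) = 2 * k + 4 := by
        intro k
        induction k with
        | zero =>
          intro _
          have h4 := Submodule.finrank_sup_add_finrank_inf_eq b₁ a₁
          rw [hdisjab.eq_bot, finrank_bot, hb₁, ha₁] at h4
          show finrank K ↥(b₁ ⊔ a₁) = 2 * 0 + 4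
          omega
        | succ k ih =>
          intro hk
          have hk' : k ≤ m - 1 := by omega
          have hrk : finrank K ↥((F k).2) = 2 * k + 4 := ih hk'
          have hle : finrank K ↥((F k).2) + 2 ≤ finrank K V := by
            rw [hrk, hVdim]; omega
          obtain ⟨hl, hd⟩ := nl_spec _ hle
          have := Submodule.finrank_sup_add_finrank_inf_eq (F k).2 (nl (F k).2)
          rw [hd.eq_bot, finrank_bot, hrk, hl] at this
          rw [hFsucc k]
          show finrank K ↥((F k).2 ⊔ nl (F k).2) = 2 * (k + 1) + 4
          omega
      -- lines and disjointness for A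
      have hAline : ∀ i, 1 ≤ i → i ≤ m → PLine (A i) := by
        intro i h1 h2
        rcases Nat.lt_or_ge i 2 with h | h
        · have : i = 1 := by omega
          rw [this, hA1]; exact ha₁
        · have hi : i - 1 = (i - 2) + 1 := by omega
          have hrk : finrank K ↥((F (i-2)).2) = 2 * (i-2) + 4 := hinv _ (by omega)
          have hle : finrank K ↥((F (i-2)).2) + 2 ≤ finrank K V := by
            rw [hrk, hVdim]; omega
          have : A i = nl (F (i-2)).2 := by
            rw [hA]
            simp only [hi, hFsucc]
          rw [this]
          exact (nl_spec _ hle).1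
      -- the prefix chain
      set Rf : ℕ → Submodule K V := fun j => if j = 1 then b₁ else (F (j-2)).2 with hRf
      have hRf1 : Rf 1 = b₁ := rfl
      have hAdisj : ∀ j, 1 ≤ j → j ≤ m → Disjoint (Rf j) (A j) := by
        intro j h1 h2
        rcases Nat.lt_or_ge j 2 with h | h
        · have : j = 1 := by omega
          rw [this, hRf1, hA1]
          exact hdisjab
        · have hj : j - 1 = (j - 2) + 1 := by omega
          have hrk : finrank K ↥((F (j-2)).2) = 2 * (j-2) + 4 := hinv _ (by omega)
          have hle : finrank K ↥((F (j-2)).2) + 2 ≤ finrank K V := by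
            rw [hrk, hVdim]; omega
          have hAj : A j = nl (F (j-2)).2 := by
            rw [hA]; simp only [hj, hFsucc]
          have hRj : Rf j = (F (j-2)).2 := by
            rw [hRf]; simp only [if_neg (by omega : ¬ j = 1)]
          rw [hAj, hRj]
          exact (nl_spec _ hle).2
      have hRrec : ∀ j, 1 ≤ j → Rf (j+1) = Rf j ⊔ A j := by
        intro j h1
        rcases Nat.lt_or_ge j 2 with h | h
        · have : j = 1 := by omega
          subst this
          show Rf 2 = Rf 1 ⊔ A 1
          rw [hRf1, hA1]
          rfl
        · have hj : j - 1 = (j - 2) + 1 := by omega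
          have hAj : A j = nl (F (j-2)).2 := by
            rw [hA]; simp only [hj, hFsucc]
          have hRj : Rf j = (F (j-2)).2 := by
            rw [hRf]; simp only [if_neg (by omega : ¬ j = 1)]
          have hRj1 : Rf (j+1) = (F (j-1)).2 := by
            rw [hRf]; simp only [if_neg (by omega : ¬ j + 1 = 1)]
            have he : j + 1 - 2 = j - 1 := by omega
            rw [he]
          rw [hRj1, hRj, hAj, hj, hFsucc]
      -- the key inductive claim
      have claim : ∀ j, 1 ≤ j → j ≤ m + 1 → ∀ q ∈ Rf j,
          ∃ b : ℕ → Submodule K V, b 1 = b₁ ∧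
            (∀ i, 2 ≤ i → i ≤ j → PLine (b i)) ∧
            (∀ i, 2 ≤ i → i ≤ j → PMeetsTwo (b i) (A (i-1)) (b (i-1))) ∧
            PLine (b j) ∧ b j ≤ Rf j ∧ q ∈ b j := by
        intro j hj1
        induction j, hj1 using Nat.le_induction with
        | base =>
          intro _ q hq
          refine ⟨fun _ => b₁, rfl, fun i h2 h1 => absurd (h2.trans h1) (by omega),
            fun i h2 h1 => absurd (h2.trans h1) (by omega), hb₁, le_of_eq hRf1.symm, hRf1 ▸ hq⟩
        | succ j hj ih =>
          intro hjm q hq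
          have hjm' : j ≤ m := by omega
          rw [hRrec j hj] at hq
          obtain ⟨s, hs, r, hr, rfl⟩ := mem_sup.1 hq
          obtain ⟨b, hb1, hbL, hbM, hbjL, hbjR, hsb⟩ := ih (by omega) s hs
          obtain ⟨P, hPb, hP0, hsP⟩ : ∃ P, P ∈ b j ∧ P ≠ 0 ∧ s ∈ (K ∙ P) := by
            by_cases hs0 : s = 0
            · obtain ⟨v, hv, hv0⟩ := line_exists_ne_zero hbjL
              exact ⟨v, hv, hv0, by simp [hs0]⟩
            · exact ⟨s, hsb, hs0, mem_span_singleton_self s⟩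
          obtain ⟨x, hxA, hx0, hrx⟩ : ∃ x, x ∈ A j ∧ x ≠ 0 ∧ r ∈ (K ∙ x) := by
            by_cases hr0 : r = 0
            · obtain ⟨v, hv, hv0⟩ := line_exists_ne_zero (hAline j hj hjm')
              exact ⟨v, hv, hv0, by simp [hr0]⟩
            · exact ⟨r, hr, hr0, mem_span_singleton_self r⟩
          obtain ⟨hcL, hcM, hcI⟩ := aux_core hP0 hx0 (hbjR hPb) hxA
            (hAdisj j hj hjm') hPb hbjR
          refine ⟨fun i => if i = j + 1 then (K ∙ P) ⊔ (K ∙ x) else b i, ?_, ?_, ?_, ?_, ?_, ?_⟩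
          · simp only [if_neg (show ¬ (1:ℕ) = j + 1 by omega)]; exact hb1
          · intro i h2 hij
            by_cases hii : i = j + 1
            · simp only [if_pos hii]; exact hcL
            · simp only [if_neg hii]; exact hbL i h2 (by omega)
          · intro i h2 hij
            by_cases hii : i = j + 1
            · subst hii
              simp only [if_pos rfl, Nat.add_sub_cancel,
                if_neg (show ¬ j = j + 1 by omega)]
              exact hcM
            · simp only [if_neg hii, if_neg (show ¬ i - 1 = j + 1 by omega)]
              exact hbM i h2 (by omega)
          · simp only [if_pos rfl]; exact hcL
          · simp only [if_pos rfl]; rw [hRrec j hj]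
            refine sup_le ?_ ?_
            · exact le_trans ((span_singleton_le_iff_mem _ _).2 hPb) (le_trans hbjR le_sup_left)
            · exact le_trans ((span_singleton_le_iff_mem _ _).2 hxA) le_sup_right
          · simp only [if_pos rfl]
            exact add_mem (Submodule.mem_sup_left hsP) (Submodule.mem_sup_right hrx)
      -- now produce the a-family
      refine ⟨A, hA1, fun i h2 hmi => hAline i (by omega) hmi, ?_⟩
      intro g hg
      -- the hyperplane
      have hRH : finrank K ↥(Rf (m+1)) = 2 * m + 2 := by
        have hRm : Rf (m+1) = (F (m-1)).2 := by
          rw [hRf]; simp only [if_neg (by omega : ¬ m + 1 = 1)]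
          have he : m + 1 - 2 = m - 1 := by omega
          rw [he]
        rw [hRm, hinv (m-1) le_rfl]
        omega
      -- g meets the hyperplane
      obtain ⟨p, hpg, hpH, hp0⟩ : ∃ p, p ∈ g ∧ p ∈ Rf (m+1) ∧ p ≠ 0 := by
        have hsum := Submodule.finrank_sup_add_finrank_inf_eq g (Rf (m+1))
        have hle : finrank K ↥(g ⊔ Rf (m+1)) ≤ finrank K V := Submodule.finrank_le _
        rw [hg, hRH] at hsum
        rw [hVdim] at hle
        have : finrank K ↥(g ⊓ Rf (m+1)) ≠ 0 := by omega
        have hnb : g ⊓ Rf (m+1) ≠ ⊥ := by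
          intro e
          rw [e, finrank_bot] at this
          omega
        obtain ⟨p, hp, hp0⟩ := (Submodule.ne_bot_iff _).1 hnb
        rw [Submodule.mem_inf] at hp
        exact ⟨p, hp.1, hp.2, hp0⟩
      rw [hRrec m hm1] at hpH
      obtain ⟨s, hs, r, hr, hsr⟩ := mem_sup.1 hpH
      obtain ⟨b, hb1, hbL, hbM, hbjL, hbjR, hsb⟩ := claim m hm1 (by omega) s hs
      obtain ⟨P, hPb, hP0, hsP⟩ : ∃ P, P ∈ b m ∧ P ≠ 0 ∧ s ∈ (K ∙ P) := by
        by_cases hs0 : s = 0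
        · obtain ⟨v, hv, hv0⟩ := line_exists_ne_zero hbjL
          exact ⟨v, hv, hv0, by simp [hs0]⟩
        · exact ⟨s, hsb, hs0, mem_span_singleton_self s⟩
      obtain ⟨x, hxA, hx0, hrx⟩ : ∃ x, x ∈ A m ∧ x ≠ 0 ∧ r ∈ (K ∙ x) := by
        by_cases hr0 : r = 0
        · obtain ⟨v, hv, hv0⟩ := line_exists_ne_zero (hAline m hm1 le_rfl)
          exact ⟨v, hv, hv0, by simp [hr0]⟩
        · exact ⟨r, hr, hr0, mem_span_singleton_self r⟩
      obtain ⟨hcL, hcM, hcI⟩ := aux_core hP0 hx0 (hbjR hPb) hxA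
        (hAdisj m hm1 le_rfl) hPb hbjR
      have hpcand : p ∈ (K ∙ P) ⊔ (K ∙ x) := by
        rw [← hsr]
        exact add_mem (Submodule.mem_sup_left hsP) (Submodule.mem_sup_right hrx)
      -- choose the final line, avoiding the degenerate case g = cand
      obtain ⟨c, hcL', hcM', hmeet⟩ :
          ∃ c : Submodule K V, PLine c ∧ PMeetsTwo c (A m) (b m) ∧ PMeets g c := by
        by_cases hge : g = (K ∙ P) ⊔ (K ∙ x)
        · -- degenerate: pick another point of A m
          have hnotle : ¬ (A m ≤ K ∙ x) := by
            intro hle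
            have h1 := Submodule.finrank_mono hle
            rw [finrank_span_singleton hx0] at h1
            have := hAline m hm1 le_rfl
            rw [PLine] at this
            omega
          obtain ⟨x', hx'A, hx'x⟩ := SetLike.not_le_iff_exists.1 hnotle
          have hx'0 : x' ≠ 0 := fun e => hx'x (by simp [e])
          obtain ⟨hc2L, hc2M, hc2I⟩ := aux_core hP0 hx'0 (hbjR hPb) hx'A
            (hAdisj m hm1 le_rfl) hPb hbjR
          refine ⟨(K ∙ P) ⊔ (K ∙ x'), hc2L, hc2M, ?_, ?_⟩
          · intro e
            apply hx'x
            have hx'mem : x' ∈ (K ∙ P) ⊔ (K ∙ x') := Submodule.mem_sup_right (mem_span_singleton_self x')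
            have : x' ∈ g := e ▸ hx'mem
            rw [hge] at this
            have : x' ∈ ((K ∙ P) ⊔ (K ∙ x)) ⊓ A m := Submodule.mem_inf.2 ⟨this, hx'A⟩
            rwa [hcI] at this
          · intro e
            have hPg : P ∈ g := hge ▸ (Submodule.mem_sup_left (mem_span_singleton_self P) :
              P ∈ (K ∙ P) ⊔ (K ∙ x))
            have : P ∈ g ⊓ ((K ∙ P) ⊔ (K ∙ x')) :=
              Submodule.mem_inf.2 ⟨hPg, Submodule.mem_sup_left (mem_span_singleton_self P)⟩
            rw [e] at this
            exact hP0 (by simpa using this)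
        · refine ⟨(K ∙ P) ⊔ (K ∙ x), hcL, hcM, hge, ?_⟩
          intro e
          have : p ∈ g ⊓ ((K ∙ P) ⊔ (K ∙ x)) := Submodule.mem_inf.2 ⟨hpg, hpcand⟩
          rw [e] at this
          exact hp0 (by simpa using this)
      refine ⟨fun i => if i = m + 1 then c else b i, ?_, ?_, ?_, ?_⟩
      · simp only [if_neg (show ¬ (1:ℕ) = m + 1 by omega)]; exact hb1
      · intro i h2 hij
        by_cases hii : i = m + 1
        · simp only [if_pos hii]; exact hcL'
        · simp only [if_neg hii]; exact hbL i h2 (by omega)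
      · intro i h2 hij
        by_cases hii : i = m + 1
        · subst hii
          simp only [if_pos rfl, Nat.add_sub_cancel,
            if_neg (show ¬ m = m + 1 by omega)]
          exact hcM'
        · simp only [if_neg hii, if_neg (show ¬ i - 1 = m + 1 by omega)]
          exact hbM i h2 (by omega)
      · simp only [if_pos rfl]
        exact hmeet
  · -- backward direction
    rintro (heq | ⟨a, ha1, haL, hfor⟩)
    · exact Or.inl heq
    by_cases heq : a₁ = b₁
    · exact Or.inl heq
    right
    by_contra hbot
    -- a₁ and b₁ meet in a point; derive a contradiction
    set W : ℕ → Submodule K V := WChain (a₁ ⊔ b₁) a with hW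
    have hW0 : W 0 = a₁ ⊔ b₁ := rfl
    have hWsucc : ∀ k, W (k+1) = W k ⊔ a (k+1) := fun k => rfl
    have hWmono : ∀ k l, k ≤ l → W k ≤ W l := fun k l h => WChain_mono _ _ h
    have haW : ∀ i, 1 ≤ i → i ≤ m → a i ≤ W m := by
      intro i h1 h2
      have : a i ≤ W i := by
        rcases Nat.exists_eq_add_of_le h1 with ⟨k, hk⟩
        have : i = k + 1 := by omega
        rw [this, hWsucc k]
        exact le_sup_right
      exact le_trans this (hWmono i m h2)
    have hbW : b₁ ≤ W m := le_trans (le_trans le_sup_right (le_of_eq hW0.symm)) (hWmono 0 m (by omega))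
    have haW1 : a₁ ≤ W m := by
      rw [← ha1]
      exact haW 1 le_rfl hm1
    -- dimension bound on W m
    have hWrk : ∀ k, 1 ≤ k → k ≤ m → finrank K ↥(W k) ≤ 2 * k + 1 := by
      intro k hk1
      induction k, hk1 using Nat.le_induction with
      | base =>
        intro _
        have hsum := Submodule.finrank_sup_add_finrank_inf_eq a₁ b₁
        rw [ha₁, hb₁] at hsum
        have hge : 1 ≤ finrank K ↥(a₁ ⊓ b₁) := by
          have : finrank K ↥(a₁ ⊓ b₁) ≠ 0 := by
            simpa [Submodule.finrank_eq_zero] using hbot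
          omega
        have hW1 : W 1 = (a₁ ⊔ b₁) ⊔ a 1 := hWsucc 0
        rw [ha1] at hW1
        have : W 1 = a₁ ⊔ b₁ := by
          rw [hW1, sup_comm (a₁ ⊔ b₁) a₁, ← sup_assoc, sup_idem]
        rw [this]
        omega
      | succ k hk ih =>
        intro hkm
        have h1 := ih (by omega)
        have h2 : PLine (a (k+1)) := by
          rcases Nat.lt_or_ge (k+1) 2 with h | h
          · have : k + 1 = 1 := by omega
            rw [this, ha1]; exact ha₁
          · exact haL (k+1) h (by omega)
        have hsum := Submodule.finrank_sup_add_finrank_inf_eq (W k) (a (k+1))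
        rw [h2] at hsum
        rw [hWsucc k]
        omega
    have hW2 : finrank K ↥(W m) + 2 ≤ finrank K V := by
      have := hWrk m hm1 le_rfl
      rw [hVdim]
      omega
    obtain ⟨g, hgline, hgdisj⟩ := exists_line_disjoint (W m) hW2
    obtain ⟨b, hb1, hbL, hbM, hbmeet⟩ := hfor g hgline
    have hbW' : ∀ j, 1 ≤ j → j ≤ m + 1 → b j ≤ W m := by
      intro j hj1
      induction j, hj1 using Nat.le_induction with
      | base =>
        intro _
        rw [hb1]
        exact hbW
      | succ j hj ih =>
        intro hjm
        have hbj : b j ≤ W m := ih (by omega)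
        have haj : a j ≤ W m := haW j hj (by omega)
        have hLaj : PLine (a j) := by
          rcases Nat.lt_or_ge j 2 with h | h
          · have : j = 1 := by omega
            rw [this, ha1]; exact ha₁
          · exact haL j h (by omega)
        have hLbj : PLine (b j) := by
          rcases Nat.lt_or_ge j 2 with h | h
          · have : j = 1 := by omega
            rw [this, hb1]; exact hb₁
          · exact hbL j h (by omega)
        have hM := hbM (j+1) (by omega) (by omega)
        have hidx : j + 1 - 1 = j := by omega
        rw [hidx] at hM
        have := pmeets_two_le (hbL (j+1) (by omega) (by omega)) hLaj hLbj hM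
        calc b (j+1) ≤ a j ⊔ b j := this
          _ ≤ W m ⊔ W m := sup_le_sup haj hbj
          _ = W m := sup_idem _
    have hcontra : g ⊓ b (m+1) = ⊥ := by
      have h1 : g ⊓ b (m+1) ≤ g ⊓ W m := inf_le_inf_left g (hbW' (m+1) (by omega) le_rfl)
      have h2 : g ⊓ W m = ⊥ := by
        rw [inf_comm]
        exact hgdisj.eq_bot
      rw [← le_bot_iff]
      exact h2 ▸ h1
    exact hbmeet.2 hcontra
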